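/- Let d ≥ 1 be an integer, α > d real, σ = (d+1)/(α+1), and let X, K, v > 0 be reals. Define 𝒞(r,t) = 2X e^{vt − r^{1−σ}} + K t r^{−σα} (1 + r^{σd}(vt)^d) for r, t > 0. Then for every real γ > (α+1)/(α−d): lim_{t→∞} 𝒞(t^γ, t) = 0. -/

import Mathlib

open Filter Real

/-- The functional form of the Lieb-Robinson bound after one step of the paper's
iterative construction (Eq. (26)):
`𝒞(r,t) = 2X e^{vt − r^{1−σ}} + K t r^{−σα}(1 + r^{σd}(vt)^d)`. -/
noncomputable def lrBound (X K v σ α : ℝ) (d : ℕ) (r t : ℝ) : ℝ :=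
  2 * X * Real.exp (v * t - r ^ (1 - σ)) +
    K * t * r ^ (-(σ * α)) * (1 + r ^ (σ * (d : ℝ)) * (v * t) ^ d)

lemma exp_term_tendsto (v a : ℝ) (ha : 1 < a) :
    Tendsto (fun t : ℝ => Real.exp (v * t - t ^ a)) atTop (nhds 0) := by
  have hinner : Tendsto (fun t : ℝ => v * t - t ^ a) atTop atBot := by
    have h1 : Tendsto (fun t : ℝ => t * (v - t ^ (a - 1))) atTop atBot := by
      apply Tendsto.atTop_mul_atBot₀ tendsto_id
      have hneg : Tendsto (fun t : ℝ => -(t ^ (a - 1))) atTop atBot :=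
        tendsto_neg_atTop_atBot.comp (tendsto_rpow_atTop (by linarith))
      have := tendsto_atBot_add_const_left atTop v hneg
      simpa [sub_eq_add_neg] using this
    apply h1.congr'
    filter_upwards [eventually_gt_atTop (0 : ℝ)] with t ht
    have : t * t ^ (a - 1) = t ^ a := by
      nth_rewrite 1 [← Real.rpow_one t]
      rw [← Real.rpow_add ht]; ring_nf
    rw [mul_sub, this, mul_comm t v]
  exact Real.tendsto_exp_atBot.comp hinner

theorem lc1_for_iterated_bound (d : ℕ) (hd : 1 ≤ d) (α : ℝ) (hα : (d : ℝ) < α)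
    (X K v : ℝ) (hX : 0 < X) (hK : 0 < K) (hv : 0 < v) :
    ∀ γ : ℝ, (α + 1) / (α - d) < γ →
      Filter.Tendsto (fun t : ℝ => lrBound X K v ((d + 1) / (α + 1)) α d (t ^ γ) t)
        Filter.atTop (nhds 0) := by
  intro γ hγ
  set σ : ℝ := ((d : ℝ) + 1) / (α + 1) with hσdef
  have hd1 : (1 : ℝ) ≤ (d : ℝ) := by exact_mod_cast hd
  have hαd : (0 : ℝ) < α - d := by linarith
  have hα1 : (0 : ℝ) < α + 1 := by linarith
  have hα0 : (0 : ℝ) < α := by linarith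
  have hγ' : α + 1 < γ * (α - d) := by
    rw [div_lt_iff₀ hαd] at hγ; linarith
  have hγpos : 0 < γ := by nlinarith
  have ha : 1 < γ * (1 - σ) := by
    rw [hσdef]
    rw [show (1 : ℝ) - ((d : ℝ) + 1) / (α + 1) = (α - d) / (α + 1) by
      field_simp; ring]
    rw [← mul_div_assoc, lt_div_iff₀ hα1]
    linarith
  have hb : 0 < γ * σ * α - 1 := by
    rw [hσdef]
    rw [show γ * (((d : ℝ) + 1) / (α + 1)) * α = γ * (((d : ℝ) + 1) * α) / (α + 1) by
      field_simp]
    rw [sub_pos, lt_div_iff₀ hα1, one_mul]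
    nlinarith [mul_pos hγpos (show (0:ℝ) < (d:ℝ)*α + d by positivity)]
  have hc : 0 < γ * σ * α - γ * σ * d - (1 + d) := by
    rw [hσdef]
    have : γ * (((d : ℝ) + 1) / (α + 1)) * α - γ * (((d : ℝ) + 1) / (α + 1)) * d
        = γ * (α - d) * (((d : ℝ) + 1) / (α + 1)) := by ring
    rw [this, sub_pos,
      show γ * (α - ↑d) * (((d : ℝ) + 1) / (α + 1)) = γ * (α - ↑d) * ((d : ℝ) + 1) / (α + 1) from
        mul_div_assoc' _ _ _, lt_div_iff₀ hα1]
    nlinarith [mul_lt_mul_of_pos_left hγ' (show (0:ℝ) < (d:ℝ)+1 by positivity)]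
  -- target function
  have hG : Tendsto (fun t : ℝ => 2 * X * Real.exp (v * t - t ^ (γ * (1 - σ))) +
      (K * t ^ (1 - γ * σ * α) +
        K * v ^ d * t ^ (1 + (d : ℝ) + γ * σ * d - γ * σ * α))) atTop (nhds 0) := by
    have h1 := (exp_term_tendsto v _ ha).const_mul (2 * X)
    have h2 : Tendsto (fun t : ℝ => K * t ^ (1 - γ * σ * α)) atTop (nhds 0) := by
      have := (tendsto_rpow_neg_atTop hb).const_mul K
      simp only [mul_zero] at this ⊢
      refine this.congr fun t => by ring_nf
    have h3 : Tendsto (fun t : ℝ => K * v ^ d *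
        t ^ (1 + (d : ℝ) + γ * σ * d - γ * σ * α)) atTop (nhds 0) := by
      have := (tendsto_rpow_neg_atTop hc).const_mul (K * v ^ d)
      simp only [mul_zero] at this ⊢
      refine this.congr fun t => by ring_nf
    have := h1.add (h2.add h3)
    simpa using this
  apply hG.congr'
  filter_upwards [eventually_gt_atTop (0 : ℝ)] with t ht
  have htγ : (0 : ℝ) < t ^ γ := Real.rpow_pos_of_pos ht γ
  have h1 : (t ^ γ) ^ (1 - σ) = t ^ (γ * (1 - σ)) := (Real.rpow_mul ht.le _ _).symm
  have h2 : (t ^ γ) ^ (-(σ * α)) = t ^ (-(γ * σ * α)) := by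
    rw [← Real.rpow_mul ht.le]; ring_nf
  have h3 : (t ^ γ) ^ (σ * (d : ℝ)) = t ^ (γ * σ * d) := by
    rw [← Real.rpow_mul ht.le]; ring_nf
  have h4 : (v * t) ^ d = v ^ d * t ^ ((d : ℝ)) := by
    rw [mul_pow, ← Real.rpow_natCast t d]
  have e1 : t * t ^ (-(γ * σ * α)) = t ^ (1 - γ * σ * α) := by
    nth_rewrite 1 [← Real.rpow_one t]
    rw [← Real.rpow_add ht]; ring_nf
  have e2 : t ^ (1 - γ * σ * α) * (t ^ (γ * σ * d) * t ^ ((d : ℝ)))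
      = t ^ (1 + (d : ℝ) + γ * σ * d - γ * σ * α) := by
    rw [← Real.rpow_add ht, ← Real.rpow_add ht]; ring_nf
  simp only [lrBound, h1, h2, h3, h4]
  rw [show K * t * t ^ (-(γ * σ * α)) * (1 + t ^ (γ * σ * d) * (v ^ d * t ^ ((d : ℝ))))
      = K * (t * t ^ (-(γ * σ * α))) +
        K * v ^ d * (t * t ^ (-(γ * σ * α)) * (t ^ (γ * σ * d) * t ^ ((d : ℝ)))) by ring]
  rw [e1, e2]
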